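/- arXiv:0802.2641 — 2 statements merged into one kernel-verified Lean document; each statement's English description precedes it below -/
import Mathlib

section
/- Assume ν_n(0, λ] ≤ β_n^{λ−1} for λ ≥ κ_n/λ_n*, β_n = exp(τ_n λ_n*), and b > 0, c > 0. Then θ_n(τ_n + c b) ≤ e^{−c b κ_n} (τ_n/(c b) + 1). -/
open MeasureTheory

/-- Upper bound θ_n(τ_n + cb) ≤ e^{−cbκ_n}(τ_n/(cb) + 1). -/
theorem stmt11 (ν : Measure ℝ) [IsFiniteMeasure ν] (κ lamstar τ β : ℝ)
    (hκ : 1 < κ) (hls : 1 < lamstar) (hβ : 1 < β)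
    (hβdef : β = Real.exp (τ * lamstar))
    (hsupp : ν (Set.Iio (κ / lamstar)) = 0)
    (hcum : ∀ l, κ / lamstar ≤ l → (ν (Set.Ioc 0 l)).toReal ≤ β ^ (l - 1))
    (b c : ℝ) (hb : 0 < b) (hc : 0 < c) :
    β * ∫ l, Real.exp (-(τ + c * b) * lamstar * l) ∂ν
      ≤ Real.exp (-(c * b * κ)) * (τ / (c * b) + 1) := by
  have hls0 : (0:ℝ) < lamstar := by linarith
  have hβ0 : (0:ℝ) < β := by linarith
  set t : ℝ := τ + c * b with ht
  have hτls : τ * lamstar = Real.log β := by rw [hβdef, Real.log_exp]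
  have hτ : 0 < τ := by
    have h1 : 0 < τ * lamstar := by rw [hτls]; exact Real.log_pos hβ
    nlinarith
  have hcb : 0 < c * b := mul_pos hc hb
  have htpos : 0 < t := by rw [ht]; linarith
  have htls : 0 < t * lamstar := mul_pos htpos hls0
  set p : ℝ := τ / t with hp
  have hp0 : 0 < p := div_pos hτ htpos
  have hp1 : p < 1 := by
    rw [hp, div_lt_one htpos]; linarith
  set a : ℝ := Real.exp (-(t * κ)) with ha
  have ha0 : 0 < a := Real.exp_pos _
  set f : ℝ → ℝ := fun l => Real.exp (-(t * lamstar * l)) with hf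
  have hfnn : 0 ≤ᵐ[ν] f := Filter.Eventually.of_forall fun l => (Real.exp_pos _).le
  have hfm : AEMeasurable f ν := (Real.measurable_exp.comp (by fun_prop)).aemeasurable
  -- layer cake
  have key : ∫⁻ l, ENNReal.ofReal (f l) ∂ν = ∫⁻ s in Set.Ioi 0, ν {l : ℝ | s < f l} :=
    lintegral_eq_lintegral_meas_lt ν hfnn hfm
  -- the bounding function
  set g : ℝ → ENNReal := (Set.Ioc 0 a).indicator (fun s => ENNReal.ofReal (s ^ (-p))) with hg
  have hgm : Measurable g := by
    apply Measurable.indicator _ measurableSet_Ioc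
    fun_prop
  -- pointwise bound
  have hpt : ∀ s ∈ Set.Ioi (0:ℝ), ENNReal.ofReal β * ν {l : ℝ | s < f l} ≤ g s := by
    intro s hs
    have hs0 : (0:ℝ) < s := hs
    set A : ℝ := -Real.log s / (t * lamstar) with hA
    have hset : {l : ℝ | s < f l} = Set.Iio A := by
      ext l
      simp only [Set.mem_setOf_eq, Set.mem_Iio, hf]
      rw [← Real.log_lt_iff_lt_exp hs0, hA, lt_div_iff₀ htls]
      constructor <;> intro h <;> nlinarith
    rw [hset]
    by_cases hsa : s ≤ a
    · -- main case
      have hAge : κ / lamstar ≤ A := by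
        have hlog : Real.log s ≤ -(t * κ) := by
          rw [← Real.log_exp (-(t*κ))]
          exact Real.log_le_log hs0 hsa
        rw [hA, le_div_iff₀ htls]
        have : κ / lamstar * (t * lamstar) = t * κ := by field_simp
        rw [this]; linarith
      have hsub : Set.Iio A ⊆ Set.Iio (κ / lamstar) ∪ Set.Ioc 0 A := by
        intro x hx
        rcases lt_or_ge x (κ / lamstar) with h | h
        · exact Or.inl h
        · refine Or.inr ⟨lt_of_lt_of_le (by positivity) h, le_of_lt hx⟩
      have hν : ν (Set.Iio A) ≤ ν (Set.Ioc 0 A) := by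
        calc ν (Set.Iio A) ≤ ν (Set.Iio (κ / lamstar) ∪ Set.Ioc 0 A) := measure_mono hsub
          _ ≤ ν (Set.Iio (κ / lamstar)) + ν (Set.Ioc 0 A) := measure_union_le _ _
          _ = ν (Set.Ioc 0 A) := by rw [hsupp, zero_add]
      have hν2 : ν (Set.Ioc 0 A) ≤ ENNReal.ofReal (β ^ (A - 1)) := by
        rw [← ENNReal.ofReal_toReal (measure_ne_top ν _)]
        exact ENNReal.ofReal_le_ofReal (hcum A hAge)
      have hgs : g s = ENNReal.ofReal (s ^ (-p)) := by
        rw [hg]; exact Set.indicator_of_mem (Set.mem_Ioc.mpr ⟨hs0, hsa⟩) _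
      rw [hgs]
      calc ENNReal.ofReal β * ν (Set.Iio A)
          ≤ ENNReal.ofReal β * ENNReal.ofReal (β ^ (A - 1)) :=
            mul_le_mul_right (le_trans hν hν2) _
        _ = ENNReal.ofReal (β * β ^ (A - 1)) := (ENNReal.ofReal_mul hβ0.le).symm
        _ = ENNReal.ofReal (s ^ (-p)) := by
            congr 1
            have h1 : β * β ^ (A - 1) = β ^ A := by
              nth_rewrite 1 [← Real.rpow_one β]
              rw [← Real.rpow_add hβ0]; ring_nf
            rw [h1, Real.rpow_def_of_pos hβ0, Real.rpow_def_of_pos hs0]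
            congr 1
            rw [← hτls, hA, hp]
            field_simp
    · -- tail case : measure zero
      push_neg at hsa
      have hAlt : A < κ / lamstar := by
        have hlog : -(t * κ) < Real.log s := by
          rw [← Real.log_exp (-(t*κ))]
          exact Real.log_lt_log ha0 hsa
        rw [hA, div_lt_iff₀ htls]
        have : κ / lamstar * (t * lamstar) = t * κ := by field_simp
        rw [this]; linarith
      have : ν (Set.Iio A) = 0 :=
        measure_mono_null (Set.Iio_subset_Iio hAlt.le) hsupp
      rw [this, mul_zero]
      exact bot_le
  -- integrate the bound
  have hIcc : IntegrableOn (fun s : ℝ => s ^ (-p)) (Set.Ioc 0 a) := by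
    rw [← intervalIntegrable_iff_integrableOn_Ioc_of_le ha0.le]
    exact intervalIntegral.intervalIntegrable_rpow' (by linarith)
  have hIval : ∫ s in Set.Ioc 0 a, s ^ (-p) = Real.exp (-(c * b * κ)) * (τ / (c * b) + 1) := by
    rw [← intervalIntegral.integral_of_le ha0.le]
    rw [integral_rpow (Or.inl (by linarith))]
    rw [Real.zero_rpow (by linarith), Real.rpow_def_of_pos ha0, Real.log_exp]
    have h1 : -(t * κ) * (-p + 1) = -(c * b * κ) := by
      rw [hp]; field_simp; ring
    rw [h1]
    have h2 : (-p + 1) = c * b / t := by rw [hp]; field_simp; ring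
    have h3 : τ / (c * b) + 1 = t / (c * b) := by rw [ht]; field_simp
    rw [sub_zero, h2, h3, div_div_eq_mul_div, mul_div_assoc]
  have hInt : ∫⁻ s in Set.Ioc 0 a, ENNReal.ofReal (s ^ (-p))
      = ENNReal.ofReal (Real.exp (-(c * b * κ)) * (τ / (c * b) + 1)) := by
    rw [← hIval]
    exact (ofReal_integral_eq_lintegral_ofReal hIcc
      ((ae_restrict_iff' measurableSet_Ioc).2
        (Filter.Eventually.of_forall fun s hs => Real.rpow_nonneg hs.1.le _))).symm
  -- combine
  have hmain : ENNReal.ofReal β * ∫⁻ l, ENNReal.ofReal (f l) ∂ν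
      ≤ ENNReal.ofReal (Real.exp (-(c * b * κ)) * (τ / (c * b) + 1)) := by
    rw [key, ← lintegral_const_mul' _ _ ENNReal.ofReal_ne_top]
    calc ∫⁻ s in Set.Ioi 0, ENNReal.ofReal β * ν {l : ℝ | s < f l}
        ≤ ∫⁻ s in Set.Ioi 0, g s := setLIntegral_mono hgm hpt
      _ = ∫⁻ s in Set.Ioc 0 a, ENNReal.ofReal (s ^ (-p)) := by
          rw [hg, lintegral_indicator measurableSet_Ioc _,
            Measure.restrict_restrict measurableSet_Ioc,
            Set.inter_eq_left.mpr (Set.Ioc_subset_Ioi_self)]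
      _ = ENNReal.ofReal (Real.exp (-(c * b * κ)) * (τ / (c * b) + 1)) := hInt
  have hieq : (fun l => Real.exp (-(τ + c * b) * lamstar * l)) = f := by
    funext l; rw [hf]; congr 1; ring
  rw [hieq, integral_eq_lintegral_of_nonneg_ae hfnn hfm.aestronglyMeasurable]
  have hβt : β = (ENNReal.ofReal β).toReal := (ENNReal.toReal_ofReal hβ0.le).symm
  rw [hβt, ← ENNReal.toReal_mul]
  exact ENNReal.toReal_le_of_le_ofReal (by positivity) hmain
end

section
/- Let coordinates of a random walk on ℤ₂ⁿ have rates ρ_n^i which are i.i.d. over a finite set {p_1, ..., p_m} with probabilities {q_1, ..., q_m}, and let p* = min_k p_k with q* = P(ρ = p*). Then for fixed c ∈ ℝ, the (deterministic given the rates, then averaged) separation at time (log n + c)/(2p*) satisfies 1 − (1 − ∑_k q_k (e^{−c}/n)^{p_k/p*})^n → 1 − exp(−q* e^{−c}) as n → ∞. -/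
open Filter

/-- Gumbel-type limit for the walk on ℤ₂ⁿ with i.i.d. random rates from a finite set. -/
theorem stmt19 (m : ℕ) (hm : 0 < m) (p q : Fin m → ℝ)
    (hp : ∀ k, 0 < p k) (hq : ∀ k, 0 < q k) (hq1 : ∑ k, q k = 1)
    (pstar qstar : ℝ) (hmin : ∀ k, pstar ≤ p k) (hattain : ∃ k, p k = pstar)
    (hqstar : qstar = ∑ k ∈ Finset.univ.filter (fun k => p k = pstar), q k)
    (c : ℝ) :
    Tendsto (fun n : ℕ =>
        1 - (1 - ∑ k, q k * (Real.exp (-c) / n) ^ (p k / pstar)) ^ n)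
      atTop (nhds (1 - Real.exp (-(qstar * Real.exp (-c))))) := by
  obtain ⟨k0, hk0⟩ := hattain
  have hps : 0 < pstar := hk0 ▸ hp k0
  set a : ℕ → ℝ := fun n => ∑ k, q k * (Real.exp (-c) / n) ^ (p k / pstar) with ha
  set L : ℝ := qstar * Real.exp (-c) with hL
  -- termwise limits
  have hterm : ∀ k : Fin m, Tendsto
      (fun n : ℕ => (n : ℝ) * (q k * (Real.exp (-c) / n) ^ (p k / pstar))) atTop
      (nhds (if p k = pstar then q k * Real.exp (-c) else 0)) := by
    intro k
    have hr1 : 1 ≤ p k / pstar := (one_le_div hps).2 (hmin k)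
    have heq : ∀ᶠ n : ℕ in atTop,
        (n : ℝ) * (q k * (Real.exp (-c) / n) ^ (p k / pstar))
          = (q k * Real.exp (-(c * (p k / pstar)))) * (n : ℝ) ^ (1 - p k / pstar) := by
      filter_upwards [eventually_ge_atTop 1] with n hn
      have hn0 : (0:ℝ) < n := by exact_mod_cast hn
      rw [Real.div_rpow (Real.exp_pos _).le hn0.le, ← Real.exp_mul, neg_mul,
        Real.rpow_sub hn0, Real.rpow_one]
      have hnr : (n:ℝ) ^ (p k / pstar) ≠ 0 := (Real.rpow_pos_of_pos hn0 _).ne'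
      field_simp
    by_cases hk : p k = pstar
    · have hr : p k / pstar = 1 := by rw [hk, div_self hps.ne']
      rw [if_pos hk]
      refine Tendsto.congr' ?_ tendsto_const_nhds
      filter_upwards [heq] with n hn
      rw [hn, hr, sub_self, Real.rpow_zero, mul_one, mul_one]
    · rw [if_neg hk]
      have hr : 1 < p k / pstar := hr1.lt_of_ne fun h => hk (by
        field_simp at h; linarith)
      have h0 : Tendsto (fun n : ℕ => ((n:ℝ)) ^ (1 - p k / pstar)) atTop (nhds 0) := by
        have := (tendsto_rpow_neg_atTop (y := p k / pstar - 1) (by linarith)).comp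
          (tendsto_natCast_atTop_atTop (R := ℝ))
        refine this.congr fun n => ?_
        show ((n:ℝ)) ^ (-(p k / pstar - 1)) = _
        congr 1
        ring
      have := h0.const_mul (q k * Real.exp (-(c * (p k / pstar))))
      rw [mul_zero] at this
      exact this.congr' (by filter_upwards [heq] with n hn; rw [hn])
  have hLeq : (∑ k, (if p k = pstar then q k * Real.exp (-c) else 0)) = L := by
    rw [hL, hqstar, Finset.sum_mul, Finset.sum_filter]
  have hsum : Tendsto (fun n : ℕ => (n:ℝ) * a n) atTop (nhds L) := by
    have h := tendsto_finset_sum Finset.univ (fun k _ => hterm k)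
    rw [hLeq] at h
    refine h.congr fun n => ?_
    rw [ha, Finset.mul_sum]
  have ha0 : Tendsto a atTop (nhds 0) := by
    have h := (tendsto_inv_atTop_nhds_zero_nat (𝕜 := ℝ)).mul hsum
    rw [zero_mul] at h
    refine h.congr' ?_
    filter_upwards [eventually_ge_atTop 1] with n hn
    have hn0 : (n:ℝ) ≠ 0 := by positivity
    field_simp
  have hapos : ∀ᶠ n : ℕ in atTop, 0 ≤ a n := by
    filter_upwards [eventually_ge_atTop 1] with n hn
    have hn0 : (0:ℝ) < n := by exact_mod_cast hn
    refine Finset.sum_nonneg fun k _ => ?_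
    exact (mul_pos (hq k)
      (Real.rpow_pos_of_pos (div_pos (Real.exp_pos (-c)) hn0) (p k / pstar))).le
  have hlt : ∀ᶠ n : ℕ in atTop, a n < 1/2 := ha0.eventually_lt_const (by norm_num)
  have hone : Tendsto (fun n : ℕ => 1 - a n) atTop (nhds 1) := by
    have := (tendsto_const_nhds : Tendsto (fun _ : ℕ => (1:ℝ)) atTop (nhds 1)).sub ha0
    simpa using this
  -- squeeze for n * log (1 - a n)
  have hlow : Tendsto (fun n : ℕ => -(((n:ℝ) * a n) / (1 - a n))) atTop (nhds (-L)) := by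
    have := (hsum.div hone (by norm_num)).neg
    simpa using this
  have hup : Tendsto (fun n : ℕ => -((n:ℝ) * a n)) atTop (nhds (-L)) := hsum.neg
  have hlog : Tendsto (fun n : ℕ => (n:ℝ) * Real.log (1 - a n)) atTop (nhds (-L)) := by
    refine tendsto_of_tendsto_of_tendsto_of_le_of_le' hlow hup ?_ ?_
    · filter_upwards [hapos, hlt] with n h0 h1
      have hpos : 0 < 1 - a n := by linarith
      have : Real.log (1 - a n)⁻¹ ≤ (1 - a n)⁻¹ - 1 :=
        Real.log_le_sub_one_of_pos (by positivity)
      rw [Real.log_inv] at this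
      have hkey : -(a n / (1 - a n)) ≤ Real.log (1 - a n) := by
        have : (1 - a n)⁻¹ - 1 = a n / (1 - a n) := by field_simp; ring
        linarith [this ▸ ‹-Real.log (1 - a n) ≤ (1 - a n)⁻¹ - 1›]
      calc -((n:ℝ) * a n / (1 - a n)) = (n:ℝ) * (-(a n / (1 - a n))) := by ring
        _ ≤ (n:ℝ) * Real.log (1 - a n) := by
            apply mul_le_mul_of_nonneg_left hkey (by positivity)
    · filter_upwards [hapos, hlt] with n h0 h1
      have hpos : 0 < 1 - a n := by linarith
      have := Real.log_le_sub_one_of_pos hpos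
      calc (n:ℝ) * Real.log (1 - a n) ≤ (n:ℝ) * (-(a n)) := by
            apply mul_le_mul_of_nonneg_left (by linarith) (by positivity)
        _ = -((n:ℝ) * a n) := by ring
  have hexp := (Real.continuous_exp.tendsto (-L)).comp hlog
  have hpow : Tendsto (fun n : ℕ => (1 - a n) ^ n) atTop (nhds (Real.exp (-L))) := by
    refine hexp.congr' ?_
    filter_upwards [hlt] with n hn
    have hpos : 0 < 1 - a n := by linarith
    show Real.exp ((n:ℝ) * Real.log (1 - a n)) = (1 - a n) ^ n
    rw [Real.exp_nat_mul, Real.exp_log hpos]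
  exact (tendsto_const_nhds : Tendsto (fun _ : ℕ => (1:ℝ)) atTop (nhds 1)).sub hpow
end
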